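/- Let μ be a probability measure on ℝ^d, {D_t} a family of trimmed regions for μ, and g: ℝ^d → [0,∞) Borel and square-integrable w.r.t. μ. Set I_v = ∫_{Q_v} g dμ, a nonincreasing continuous function of v on [0,1). Then for 0 < s < t < 1, the Lebesgue–Stieltjes integral satisfies ∫_s^t G_v dI_v = −∫_{D_t \ D_s} G_{τ(x)} g(x) μ(dx). -/

import Mathlib

open MeasureTheory Set Real Filter

noncomputable section

/-- A family of *trimmed regions* for a probability measure `μ` on `ℝ^d`:
closed sets `D t`, `t ∈ [0,1]`, nondecreasing, with `μ (D 0) = 0`, `μ (D t) < 1`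
for `t < 1`, `D 1 = ℝ^d`, left jumps `μ`-null, and right-continuity. -/
structure TrimmedFamily (d : ℕ) (μ : Measure (Fin d → ℝ)) : Type where
  D : ℝ → Set (Fin d → ℝ)
  isClosed : ∀ t ∈ Icc (0:ℝ) 1, IsClosed (D t)
  mono : ∀ s t : ℝ, 0 ≤ s → s ≤ t → t ≤ 1 → D s ⊆ D t
  null_zero : μ (D 0) = 0
  meas_lt_one : ∀ t : ℝ, 0 ≤ t → t < 1 → μ (D t) < 1
  one_eq_univ : D 1 = univ
  left_jump_null : ∀ t : ℝ, 0 < t → t ≤ 1 → μ (D t \ ⋃ s ∈ Ico (0:ℝ) t, D s) = 0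
  right_cont : ∀ t : ℝ, 0 ≤ t → t < 1 → D t = ⋂ s ∈ Ioc t (1:ℝ), D s

namespace TrimmedFamily

variable {d : ℕ} {μ : Measure (Fin d → ℝ)} (T : TrimmedFamily d μ)

/-- `Q t = ℝ^d \ D t`. -/
def Q (t : ℝ) : Set (Fin d → ℝ) := (T.D t)ᶜ

/-- `τ(x) = inf {t ∈ [0,1] : x ∈ D t}`. -/
def tau (x : Fin d → ℝ) : ℝ := sInf {t | t ∈ Icc (0:ℝ) 1 ∧ x ∈ T.D t}

/-- `μ_t = μ(Q_t)` (as a real number). -/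
def muQ (t : ℝ) : ℝ := (μ (T.Q t)).toReal

/-- `G_t = (1/μ(Q_t)) ∫_{Q_t} g dμ`. -/
def G (g : (Fin d → ℝ) → ℝ) (t : ℝ) : ℝ := (∫ y in T.Q t, g y ∂μ) / T.muQ t

/- Auxiliary lemmas -/

lemma tau_set_nonempty (x : Fin d → ℝ) :
    {t | t ∈ Icc (0:ℝ) 1 ∧ x ∈ T.D t}.Nonempty :=
  ⟨1, ⟨⟨zero_le_one, le_refl 1⟩, by simp [T.one_eq_univ]⟩⟩

lemma tau_set_bddBelow (x : Fin d → ℝ) :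
    BddBelow {t | t ∈ Icc (0:ℝ) 1 ∧ x ∈ T.D t} :=
  ⟨0, fun r hr => hr.1.1⟩

lemma tau_nonneg (x : Fin d → ℝ) : 0 ≤ T.tau x :=
  le_csInf (T.tau_set_nonempty x) fun r hr => hr.1.1

lemma tau_le_one (x : Fin d → ℝ) : T.tau x ≤ 1 :=
  csInf_le (T.tau_set_bddBelow x) ⟨⟨zero_le_one, le_refl 1⟩, by simp [T.one_eq_univ]⟩

lemma tau_le_iff {u : ℝ} (hu0 : 0 ≤ u) (hu1 : u < 1) (x : Fin d → ℝ) :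
    T.tau x ≤ u ↔ x ∈ T.D u := by
  constructor
  · intro h
    rw [T.right_cont u hu0 hu1]
    refine mem_iInter₂.2 fun w hw => ?_
    obtain ⟨r, hr, hrw⟩ := exists_lt_of_csInf_lt (T.tau_set_nonempty x)
      (lt_of_le_of_lt h hw.1)
    exact T.mono r w hr.1.1 hrw.le hw.2 hr.2
  · intro h
    exact csInf_le (T.tau_set_bddBelow x) ⟨⟨hu0, hu1.le⟩, h⟩

lemma measurable_tau : Measurable T.tau := by
  apply measurable_of_Iic
  intro u
  rcases lt_or_ge u 0 with h | h
  · have : T.tau ⁻¹' Iic u = ∅ := by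
      ext x
      simp only [mem_preimage, mem_Iic, mem_empty_iff_false, iff_false, not_le]
      exact h.trans_le (T.tau_nonneg x)
    rw [this]; exact MeasurableSet.empty
  · rcases lt_or_ge u 1 with h1 | h1
    · have : T.tau ⁻¹' Iic u = T.D u := by
        ext x
        simp only [mem_preimage, mem_Iic]
        exact T.tau_le_iff h h1 x
      rw [this]
      exact (T.isClosed u ⟨h, h1.le⟩).measurableSet
    · have : T.tau ⁻¹' Iic u = univ := by
        ext x
        simp only [mem_preimage, mem_Iic, mem_univ, iff_true]
        exact (T.tau_le_one x).trans h1
      rw [this]; exact MeasurableSet.univ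

end TrimmedFamily

/-- The entropy `Ent_μ g = ∫ g log g dμ − (∫ g dμ) log (∫ g dμ)`
(with the convention `0 log 0 = 0`, which is automatic since `Real.log 0 = 0`). -/
def entropy {α : Type*} [MeasurableSpace α] (μ : Measure α) (g : α → ℝ) : ℝ :=
  (∫ x, g x * Real.log (g x) ∂μ) - (∫ x, g x ∂μ) * Real.log (∫ x, g x ∂μ)

/-- Identity: `∫_s^t G_v dI_v = −∫_{D_t \ D_s} G_{τ(x)} g(x) μ(dx)` for `0 < s < t < 1`,
where `I_v = ∫_{Q_v} g dμ` is nonincreasing and continuous on `[0,1)`. The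
Lebesgue–Stieltjes integral w.r.t. `v ↦ I_v` is encoded via any Stieltjes function `S`
agreeing with `−I_·` on `[s,t]`, so that `∫_s^t G_v dI_v = −∫_{(s,t]} G_v dS`. -/
theorem stieltjes_integral_G_dI
    {d : ℕ} (μ : Measure (Fin d → ℝ)) [IsProbabilityMeasure μ]
    (T : TrimmedFamily d μ) (g : (Fin d → ℝ) → ℝ)
    (hg_meas : Measurable g) (hg_nonneg : ∀ x, 0 ≤ g x) (hg_sq : MemLp g 2 μ)
    (s t : ℝ) (hs : 0 < s) (hst : s < t) (ht : t < 1)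
    (S : StieltjesFunction ℝ) (hS : ∀ v ∈ Icc s t, S v = - ∫ y in T.Q v, g y ∂μ) :
    -∫ v in Ioc s t, T.G g v ∂S.measure
      = -∫ x in T.D t \ T.D s, T.G g (T.tau x) * g x ∂μ := by
  rw [neg_inj]
  have h0s : (0:ℝ) ≤ s := hs.le
  have h0t : (0:ℝ) ≤ t := (hs.trans hst).le
  have hs1 : s < 1 := hst.trans ht
  have hint : Integrable g μ := hg_sq.integrable one_le_two
  set I : ℝ → ℝ := fun v => ∫ y in T.Q v, g y ∂μ with hIdef
  have hDmeas : ∀ u : ℝ, 0 ≤ u → u ≤ 1 → MeasurableSet (T.D u) := fun u h1 h2 =>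
    (T.isClosed u ⟨h1, h2⟩).measurableSet
  have hQmeas : ∀ u : ℝ, 0 ≤ u → u ≤ 1 → MeasurableSet (T.Q u) := fun u h1 h2 =>
    (hDmeas u h1 h2).compl
  have hQsub : ∀ u v : ℝ, 0 ≤ u → u ≤ v → v ≤ 1 → T.Q v ⊆ T.Q u :=
    fun u v h1 h2 h3 => compl_subset_compl.2 (T.mono u v h1 h2 h3)
  set A := T.D t \ T.D s with hA
  have hAmeas : MeasurableSet A :=
    (hDmeas t h0t ht.le).diff (hDmeas s h0s hs1.le)
  set ν := μ.withDensity fun x => ENNReal.ofReal (g x) with hν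
  have hνval : ∀ B : Set (Fin d → ℝ), MeasurableSet B →
      ν B = ENNReal.ofReal (∫ x in B, g x ∂μ) := by
    intro B hB
    rw [hν, withDensity_apply _ hB]
    exact (ofReal_integral_eq_lintegral_ofReal hint.restrict
      (Eventually.of_forall fun x => hg_nonneg x)).symm
  -- integral over a difference of D-sets
  have hIdiff : ∀ a b : ℝ, 0 ≤ a → a ≤ b → b ≤ 1 →
      ∫ x in T.D b \ T.D a, g x ∂μ = I a - I b := by
    intro a b ha hab hb1
    have hset : T.D b \ T.D a = T.Q a \ T.Q b := by
      ext x; simp only [mem_diff, TrimmedFamily.Q, mem_compl_iff, not_not]; tauto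
    rw [hset, integral_diff (hQmeas b (ha.trans hab) hb1) hint.integrableOn
      (hQsub a b ha hab hb1)]
  have hcompute : ∀ a b : ℝ, s ≤ a → a ≤ b → b ≤ t →
      ν (T.D b \ T.D a) = S.measure (Ioc a b) := by
    intro a b ha hab hbt
    rw [S.measure_Ioc, hS a ⟨ha, hab.trans hbt⟩, hS b ⟨ha.trans hab, hbt⟩,
      hνval _ ((hDmeas b (h0s.trans (ha.trans hab)) (hbt.trans ht.le)).diff
        (hDmeas a (h0s.trans ha) ((hab.trans hbt).trans ht.le))),
      hIdiff a b (h0s.trans ha) hab (hbt.trans ht.le)]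
    congr 1
    ring
  -- tau maps A into (s, t]
  have htauA : ∀ x ∈ A, T.tau x ∈ Ioc s t := by
    intro x hx
    exact ⟨lt_of_not_ge fun h => hx.2 ((T.tau_le_iff h0s hs1 x).1 h),
      (T.tau_le_iff h0t ht x).2 hx.1⟩
  -- finiteness
  haveI hνfin : IsFiniteMeasure (ν.restrict A) := ⟨by
    rw [Measure.restrict_apply_univ, hνval A hAmeas]
    exact ENNReal.ofReal_lt_top⟩
  haveI : IsFiniteMeasure ((ν.restrict A).map T.tau) := ⟨by
    rw [Measure.map_apply T.measurable_tau MeasurableSet.univ, preimage_univ]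
    exact measure_lt_top _ _⟩
  -- the pushforward identity
  have hmap : (ν.restrict A).map T.tau = S.measure.restrict (Ioc s t) := by
    apply MeasureTheory.Measure.ext_of_Ioc_finite
    · rw [Measure.map_apply T.measurable_tau MeasurableSet.univ, preimage_univ,
        Measure.restrict_apply_univ, Measure.restrict_apply_univ,
        hcompute s t le_rfl hst.le le_rfl]
    · intro a b hab
      rw [Measure.map_apply T.measurable_tau measurableSet_Ioc,
        Measure.restrict_apply (T.measurable_tau measurableSet_Ioc),
        Measure.restrict_apply measurableSet_Ioc, Ioc_inter_Ioc]
      have hseteq : T.tau ⁻¹' Ioc a b ∩ A = T.tau ⁻¹' Ioc (a ⊔ s) (b ⊓ t) := by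
        ext x
        simp only [mem_inter_iff, mem_preimage, mem_Ioc, hA, mem_diff]
        constructor
        · rintro ⟨⟨h1, h2⟩, hxt, hxs⟩
          have hta : T.tau x ≤ t := (T.tau_le_iff h0t ht x).2 hxt
          have hts : ¬ T.tau x ≤ s := fun h => hxs ((T.tau_le_iff h0s hs1 x).1 h)
          exact ⟨max_lt h1 (not_le.1 hts), le_min h2 hta⟩
        · rintro ⟨h1, h2⟩
          have ha' : a < T.tau x := lt_of_le_of_lt le_sup_left h1
          have hs' : s < T.tau x := lt_of_le_of_lt le_sup_right h1
          have hb' : T.tau x ≤ b := h2.trans inf_le_left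
          have ht' : T.tau x ≤ t := h2.trans inf_le_right
          exact ⟨⟨ha', hb'⟩, (T.tau_le_iff h0t ht x).1 ht',
            fun h => absurd ((T.tau_le_iff h0s hs1 x).2 h) (not_le.2 hs')⟩
      rw [hseteq]
      rcases le_or_gt (b ⊓ t) (a ⊔ s) with hle | hlt
      · rw [Ioc_eq_empty (not_lt.2 hle), preimage_empty, measure_empty, measure_empty]
      · have ha'0 : (0:ℝ) ≤ a ⊔ s := h0s.trans le_sup_right
        have hb'1 : b ⊓ t < 1 := lt_of_le_of_lt inf_le_right ht
        have ha'1 : a ⊔ s < 1 := hlt.trans hb'1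
        have hpre : T.tau ⁻¹' Ioc (a ⊔ s) (b ⊓ t) = T.D (b ⊓ t) \ T.D (a ⊔ s) := by
          ext x
          simp only [mem_preimage, mem_Ioc, mem_diff]
          rw [← T.tau_le_iff (ha'0.trans hlt.le) hb'1 x, ← T.tau_le_iff ha'0 ha'1 x]
          constructor
          · rintro ⟨h1, h2⟩; exact ⟨h2, not_le.2 h1⟩
          · rintro ⟨h1, h2⟩; exact ⟨not_le.1 h2, h1⟩
        rw [hpre, hcompute (a ⊔ s) (b ⊓ t) le_sup_right hlt.le inf_le_right]
  -- the clamped version G' of G, globally measurable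
  set c : ℝ → ℝ := fun v => s ⊔ (v ⊓ t) with hc
  have hcmem : ∀ v, c v ∈ Icc s t := fun v => ⟨le_sup_left, sup_le hst.le inf_le_right⟩
  have hcmono : Monotone c := fun u v huv => sup_le_sup_left (inf_le_inf_right t huv) s
  have hceq : ∀ v ∈ Icc s t, c v = v := by
    intro v hv
    simp only [hc]
    rw [inf_eq_left.2 hv.2, sup_eq_right.2 hv.1]
  have hQc : ∀ u v : ℝ, u ≤ v → T.Q (c v) ⊆ T.Q (c u) := by
    intro u v huv
    exact hQsub (c u) (c v) (h0s.trans (hcmem u).1) (hcmono huv)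
      ((hcmem v).2.trans ht.le)
  set G' : ℝ → ℝ := fun v => (∫ y in T.Q (c v), g y ∂μ) / T.muQ (c v) with hG'
  have hG'meas : Measurable G' := by
    have h1 : Antitone fun v => ∫ y in T.Q (c v), g y ∂μ := by
      intro u v huv
      exact setIntegral_mono_set hint.integrableOn
        (Eventually.of_forall fun x => hg_nonneg x)
        (HasSubset.Subset.eventuallyLE (hQc u v huv))
    have h2 : Antitone fun v => T.muQ (c v) := by
      intro u v huv
      exact ENNReal.toReal_mono (measure_ne_top μ _) (measure_mono (hQc u v huv))
    exact h1.measurable.div h2.measurable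
  have hGeq : EqOn (T.G g) G' (Ioc s t) := by
    intro v hv
    simp only [hG', TrimmedFamily.G]
    rw [hceq v ⟨hv.1.le, hv.2⟩]
  rw [setIntegral_congr_fun measurableSet_Ioc hGeq]
  calc ∫ v in Ioc s t, G' v ∂S.measure
      = ∫ v, G' v ∂((ν.restrict A).map T.tau) := by rw [hmap]
    _ = ∫ x, G' (T.tau x) ∂(ν.restrict A) :=
        integral_map T.measurable_tau.aemeasurable
          hG'meas.stronglyMeasurable.aestronglyMeasurable
    _ = ∫ x, G' (T.tau x) ∂((μ.restrict A).withDensity fun x => ENNReal.ofReal (g x)) := by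
        rw [hν, restrict_withDensity hAmeas]
    _ = ∫ x, (Real.toNNReal (g x)) • G' (T.tau x) ∂(μ.restrict A) := by
        rw [← integral_withDensity_eq_integral_smul hg_meas.real_toNNReal]
        rfl
    _ = ∫ x in A, T.G g (T.tau x) * g x ∂μ := by
        apply setIntegral_congr_fun hAmeas
        intro x hx
        show (g x).toNNReal • G' (T.tau x) = T.G g (T.tau x) * g x
        rw [NNReal.smul_def, Real.coe_toNNReal _ (hg_nonneg x), ← hGeq (htauA x hx),
          smul_eq_mul, mul_comm]
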